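/- Let H be a real Hilbert space, E a nonempty closed convex subset of H, and f : E × E → ℝ a bifunction satisfying conditions (A1)–(A4). Let S : H → H be an (α, β)-generalized hybrid mapping with F(S) ∩ EP(f) ≠ ∅. Let {r_n} ⊂ (0,∞) satisfy liminf_{n→∞} r_n > 0 and let {β_n} be a sequence in [b,1] for some b ∈ (0,1) with liminf_{n→∞} β_n(1−β_n) > 0. Let x_1 = x ∈ H and let {x_n} ⊂ H and {u_n} ⊂ E satisfy, for all n ∈ ℕ: f(u_n, y) + (1/r_n)⟨y − u_n, u_n − x_n⟩ ≥ 0 for all y ∈ E, and x_{n+1} = S((1−β_n)x_n + β_n S u_n). Then {x_n} converges weakly to a point v ∈ F(S) ∩ EP(f), and v = lim_{n→∞} P_{F(S)∩EP(f)}(x_n). -/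

import Mathlib

open Filter RealInnerProductSpace
open scoped Topology

/-- convex identity -/
lemma cid_aux {H : Type*} [NormedAddCommGroup H] [InnerProductSpace ℝ H]
    (t : ℝ) (a b : H) :
    ‖(1 - t) • a + t • b‖ ^ 2
      = (1 - t) * ‖a‖ ^ 2 + t * ‖b‖ ^ 2 - t * (1 - t) * ‖a - b‖ ^ 2 := by
  have h1 : ‖(1 - t) • a + t • b‖ ^ 2 = ⟪(1 - t) • a + t • b, (1 - t) • a + t • b⟫ :=
    (real_inner_self_eq_norm_sq _).symm
  have h2 : ‖a‖ ^ 2 = ⟪a, a⟫ := (real_inner_self_eq_norm_sq _).symm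
  have h3 : ‖b‖ ^ 2 = ⟪b, b⟫ := (real_inner_self_eq_norm_sq _).symm
  have h4 : ‖a - b‖ ^ 2 = ⟪a, a⟫ - 2 * ⟪a, b⟫ + ⟪b, b⟫ := by
    rw [← h2, ← h3]
    exact norm_sub_sq_real a b
  rw [h1, h2, h3, h4]
  simp only [inner_add_add_self, real_inner_smul_left, real_inner_smul_right, real_inner_comm b a]
  ring

/-- weak sequential compactness of bounded sequences in a Hilbert space -/
lemma wbw {H : Type*} [NormedAddCommGroup H] [InnerProductSpace ℝ H] [CompleteSpace H]
    (x : ℕ → H) (M : ℝ) (hM : ∀ n, ‖x n‖ ≤ M) :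
    ∃ φ : ℕ → ℕ, StrictMono φ ∧ ∃ v : H, ∀ w : H,
      Tendsto (fun n => ⟪x (φ n), w⟫) atTop (𝓝 ⟪v, w⟫) := by
  have hM0 : 0 ≤ M := le_trans (norm_nonneg _) (hM 0)
  -- diagonal extraction via compactness of the Hilbert cube
  set a : ℕ → (ℕ → ℝ) := fun n m => ⟪x n, x m⟫ with ha_def
  have hT : IsCompact (Set.univ.pi fun _ : ℕ => Set.Icc (-(M*M)) (M*M)) :=
    isCompact_univ_pi fun _ => isCompact_Icc
  have ha : ∀ n, a n ∈ Set.univ.pi fun _ : ℕ => Set.Icc (-(M*M)) (M*M) := by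
    intro n m _
    have := abs_real_inner_le_norm (x n) (x m)
    have h2 : ‖x n‖ * ‖x m‖ ≤ M * M :=
      mul_le_mul (hM n) (hM m) (norm_nonneg _) hM0
    have := abs_le.mp (le_trans this h2)
    exact ⟨this.1, this.2⟩
  obtain ⟨L, _, φ, hφ, hconv⟩ := hT.tendsto_subseq ha
  have hpt : ∀ m, Tendsto (fun n => ⟪x (φ n), x m⟫) atTop (𝓝 (L m)) := by
    intro m
    have := (tendsto_pi_nhds.mp hconv) m
    exact this
  refine ⟨φ, hφ, ?_⟩
  -- convergence of ⟪x (φ n), y⟫ for y in the span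
  have hspan : ∀ y ∈ Submodule.span ℝ (Set.range x),
      ∃ l, Tendsto (fun n => ⟪x (φ n), y⟫) atTop (𝓝 l) := by
    intro y hy
    induction hy using Submodule.span_induction with
    | mem y hy =>
      obtain ⟨m, rfl⟩ := hy
      exact ⟨L m, hpt m⟩
    | zero => exact ⟨0, by simp only [inner_zero_right]; exact tendsto_const_nhds⟩
    | add y z _ _ hy hz =>
      obtain ⟨l1, h1⟩ := hy; obtain ⟨l2, h2⟩ := hz
      exact ⟨l1 + l2, by simpa [inner_add_right] using h1.add h2⟩
    | smul c y _ hy =>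
      obtain ⟨l, h⟩ := hy
      exact ⟨c * l, by simpa [real_inner_smul_right] using h.const_mul c⟩
  -- convergence of ⟪x (φ n), w⟫ for every w
  have hW : ∀ w : H, ∃ l, Tendsto (fun n => ⟪x (φ n), w⟫) atTop (𝓝 l) := by
    intro w
    set V := (Submodule.span ℝ (Set.range x)).topologicalClosure with hV
    haveI : CompleteSpace V := (Submodule.isClosed_topologicalClosure _).completeSpace_coe
    set w1 : H := (V.orthogonalProjectionOnto w : H) with hw1
    have hmemV : ∀ n, x n ∈ V :=
      fun n => Submodule.le_topologicalClosure _ (Submodule.subset_span ⟨n, rfl⟩)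
    have hperp : ∀ n, ⟪x n, w - w1⟫ = 0 := by
      intro n
      exact (Submodule.mem_orthogonal V _).mp
        (Submodule.sub_starProjection_mem_orthogonal (K := V) w) (x n) (hmemV n)
    have heq : ∀ n, ⟪x n, w⟫ = ⟪x n, w1⟫ := by
      intro n
      have := hperp n
      rw [inner_sub_right] at this
      linarith
    have hcl : w1 ∈ closure ((Submodule.span ℝ (Set.range x) : Submodule ℝ H) : Set H) := by
      rw [← Submodule.topologicalClosure_coe]
      exact (V.orthogonalProjectionOnto w).2
    have hcauchy : CauchySeq (fun n => ⟪x (φ n), w1⟫) := by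
      rw [Metric.cauchySeq_iff]
      intro ε hε
      have hden : (0:ℝ) < ε / (3 * (M + 1)) := by positivity
      obtain ⟨y, hy, hdy⟩ := Metric.mem_closure_iff.mp hcl _ hden
      obtain ⟨l, hl⟩ := hspan y hy
      have hc : CauchySeq (fun n => ⟪x (φ n), y⟫) := hl.cauchySeq
      rw [Metric.cauchySeq_iff] at hc
      obtain ⟨N, hN⟩ := hc (ε/3) (by linarith)
      refine ⟨N, fun m hm n hn => ?_⟩
      have key : ∀ k, |⟪x (φ k), w1⟫ - ⟪x (φ k), y⟫| ≤ ε/3 := by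
        intro k
        rw [← inner_sub_right]
        refine le_trans (abs_real_inner_le_norm _ _) ?_
        have h1 : ‖w1 - y‖ ≤ ε / (3 * (M + 1)) := by
          have := hdy
          rw [dist_eq_norm] at this
          linarith
        have h2 : ‖x (φ k)‖ * ‖w1 - y‖ ≤ M * (ε / (3 * (M + 1))) :=
          mul_le_mul (hM _) h1 (norm_nonneg _) hM0
        refine le_trans h2 ?_
        rw [mul_div_assoc', div_le_div_iff₀ (by positivity) (by norm_num : (0:ℝ) < 3)]
        nlinarith [mul_nonneg hM0 hε.le]
      have hmn := hN m hm n hn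
      rw [Real.dist_eq] at *
      have km := key m; have kn := key n
      calc |⟪x (φ m), w1⟫ - ⟪x (φ n), w1⟫|
          ≤ |⟪x (φ m), w1⟫ - ⟪x (φ m), y⟫| + |⟪x (φ m), y⟫ - ⟪x (φ n), y⟫|
            + |⟪x (φ n), y⟫ - ⟪x (φ n), w1⟫| := by
            have := abs_sub_le (⟪x (φ m), w1⟫) (⟪x (φ m), y⟫) (⟪x (φ n), w1⟫)
            have h2 := abs_sub_le (⟪x (φ m), y⟫) (⟪x (φ n), y⟫) (⟪x (φ n), w1⟫)
            linarith
        _ < ε := by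
            have := abs_sub_comm (⟪x (φ n), y⟫) (⟪x (φ n), w1⟫)
            linarith
    obtain ⟨l, hl⟩ := cauchySeq_tendsto_of_complete hcauchy
    exact ⟨l, by simpa only [heq] using hl⟩
  -- build the weak limit via Riesz representation
  choose lfun hlfun using hW
  have hbound : ∀ w, |lfun w| ≤ M * ‖w‖ := by
    intro w
    have h1 : Tendsto (fun n => |⟪x (φ n), w⟫|) atTop (𝓝 |lfun w|) := (hlfun w).abs
    refine le_of_tendsto h1 (Eventually.of_forall fun n => ?_)
    exact le_trans (abs_real_inner_le_norm _ _)
      (mul_le_mul_of_nonneg_right (hM _) (norm_nonneg _))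
  have hadd : ∀ w₁ w₂, lfun (w₁ + w₂) = lfun w₁ + lfun w₂ := by
    intro w₁ w₂
    refine tendsto_nhds_unique (hlfun (w₁ + w₂)) ?_
    simpa [inner_add_right] using (hlfun w₁).add (hlfun w₂)
  have hsmul : ∀ (c : ℝ) w, lfun (c • w) = c * lfun w := by
    intro c w
    refine tendsto_nhds_unique (hlfun (c • w)) ?_
    simpa [real_inner_smul_right] using (hlfun w).const_mul c
  set ℓ : H →L[ℝ] ℝ := LinearMap.mkContinuous
    { toFun := lfun, map_add' := hadd, map_smul' := hsmul } M
    (fun w => by simpa [Real.norm_eq_abs] using hbound w) with hℓ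
  refine ⟨(InnerProductSpace.toDual ℝ H).symm ℓ, fun w => ?_⟩
  have : ⟪(InnerProductSpace.toDual ℝ H).symm ℓ, w⟫ = ℓ w :=
    InnerProductSpace.toDual_symm_apply
  rw [this]
  exact hlfun w

set_option maxHeartbeats 2000000 in
set_option maxRecDepth 8000 in
/-- Corollary: weak convergence of the iteration x_{n+1} = S((1-β_n)x_n + β_n S u_n)
for an equilibrium problem and an (α, β)-generalized hybrid mapping. -/
theorem stmt_2
    {H : Type*} [NormedAddCommGroup H] [InnerProductSpace ℝ H] [CompleteSpace H]
    (E : Set H) (hEne : E.Nonempty) (hEcl : IsClosed E) (hEco : Convex ℝ E)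
    (f : H → H → ℝ)
    (hA1 : ∀ x ∈ E, f x x = 0)
    (hA2 : ∀ x ∈ E, ∀ y ∈ E, f x y + f y x ≤ 0)
    (hA3 : ∀ x ∈ E, ∀ y ∈ E, ∀ z ∈ E,
      Filter.limsup (fun t : ℝ => f (t • z + (1 - t) • x) y) (nhdsWithin 0 (Set.Ioi 0)) ≤ f x y)
    (hA4c : ∀ x ∈ E, ConvexOn ℝ E (f x))
    (hA4l : ∀ x ∈ E, LowerSemicontinuousOn (f x) E)
    (S : H → H) (α β : ℝ)
    (hS : ∀ x y : H,
      α * ‖S x - S y‖ ^ 2 + (1 - α) * ‖x - S y‖ ^ 2 ≤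
        β * ‖S x - y‖ ^ 2 + (1 - β) * ‖x - y‖ ^ 2)
    (K : Set H)
    (hK : K = {z : H | S z = z} ∩ {z ∈ E | ∀ w ∈ E, 0 ≤ f z w})
    (hKne : K.Nonempty)
    (r : ℕ → ℝ) (hr : ∀ n, 0 < r n) (hrinf : 0 < Filter.liminf r Filter.atTop)
    (b : ℝ) (hb : 0 < b) (hb1 : b < 1)
    (βs : ℕ → ℝ) (hβs : ∀ n, b ≤ βs n ∧ βs n ≤ 1)
    (hβinf : 0 < Filter.liminf (fun n => βs n * (1 - βs n)) Filter.atTop)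
    (x u : ℕ → H)
    (hu : ∀ n, u n ∈ E)
    (hueq : ∀ n, ∀ w ∈ E, 0 ≤ f (u n) w + (1 / r n) * ⟪w - u n, u n - x n⟫)
    (hx : ∀ n, x (n + 1) = S ((1 - βs n) • x n + βs n • S (u n))) :
    ∃ v ∈ K,
      (∀ w : H, Filter.Tendsto (fun n => ⟪x n, w⟫) Filter.atTop (𝓝 ⟪v, w⟫)) ∧
      ∃ p : ℕ → H,
        (∀ n, p n ∈ K ∧ ∀ w ∈ K, ‖x n - p n‖ ≤ ‖x n - w‖) ∧
        Filter.Tendsto p Filter.atTop (𝓝 v) := by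
  obtain ⟨p₀, hp₀⟩ := hKne
  have hKE : ∀ z ∈ K, z ∈ E := by
    intro z hz; rw [hK] at hz; exact hz.2.1
  have hKfix : ∀ z ∈ K, S z = z := by
    intro z hz; rw [hK] at hz; exact hz.1
  have hKep : ∀ z ∈ K, ∀ w ∈ E, 0 ≤ f z w := by
    intro z hz; rw [hK] at hz; exact hz.2.2
  -- quasi-nonexpansiveness
  have quasi : ∀ z ∈ K, ∀ y : H, ‖S y - z‖ ≤ ‖y - z‖ := by
    intro z hz y
    have h := hS z y
    rw [hKfix z hz] at h
    have hsq : ‖z - S y‖ ^ 2 ≤ ‖z - y‖ ^ 2 := by nlinarith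
    rw [norm_sub_rev z (S y), norm_sub_rev z y] at hsq
    exact le_of_sq_le_sq hsq (norm_nonneg _)
  have sq_mono : ∀ c d : H, ‖c‖ ≤ ‖d‖ → ‖c‖ ^ 2 ≤ ‖d‖ ^ 2 := fun c d h =>
    pow_le_pow_left₀ (norm_nonneg _) h 2
  -- inner product inequality from the equilibrium condition
  have ukey : ∀ z ∈ K, ∀ n, 0 ≤ ⟪z - u n, u n - x n⟫ := by
    intro z hz n
    have h1 := hueq n z (hKE z hz)
    have h2 := hA2 (u n) (hu n) z (hKE z hz)
    have h3 := hKep z hz (u n) (hu n)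
    have h4 : 0 ≤ (1 / r n) * ⟪z - u n, u n - x n⟫ := by linarith
    exact nonneg_of_mul_nonneg_right h4 (by have := hr n; positivity)
  -- firm nonexpansiveness type inequality
  have firm : ∀ z ∈ K, ∀ n, ‖u n - z‖ ^ 2 + ‖x n - u n‖ ^ 2 ≤ ‖x n - z‖ ^ 2 := by
    intro z hz n
    have hid : ‖x n - z‖ ^ 2
        = ‖x n - u n‖ ^ 2 + 2 * ⟪x n - u n, u n - z⟫ + ‖u n - z‖ ^ 2 := by
      rw [show x n - z = (x n - u n) + (u n - z) by abel]
      exact norm_add_sq_real _ _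
    have hin : ⟪x n - u n, u n - z⟫ = ⟪z - u n, u n - x n⟫ := by
      rw [show x n - u n = -(u n - x n) by abel, show u n - z = -(z - u n) by abel]
      rw [inner_neg_neg, real_inner_comm]
    have := ukey z hz n
    rw [hin] at hid
    linarith
  -- the key decreasing inequality
  have main : ∀ z ∈ K, ∀ n, ‖x (n+1) - z‖ ^ 2 + βs n * ‖x n - u n‖ ^ 2
      + βs n * (1 - βs n) * ‖x n - S (u n)‖ ^ 2 ≤ ‖x n - z‖ ^ 2 := by
    intro z hz n
    obtain ⟨hb1n, hb2n⟩ := hβs n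
    have ht0 : (0:ℝ) ≤ βs n := le_trans hb.le hb1n
    have ht1 : (0:ℝ) ≤ 1 - βs n := by linarith
    have hyz : (1 - βs n) • x n + βs n • S (u n) - z
        = (1 - βs n) • (x n - z) + βs n • (S (u n) - z) := by
      module
    have hid : ‖(1 - βs n) • x n + βs n • S (u n) - z‖ ^ 2
        = (1 - βs n) * ‖x n - z‖ ^ 2 + βs n * ‖S (u n) - z‖ ^ 2
          - βs n * (1 - βs n) * ‖x n - S (u n)‖ ^ 2 := by
      rw [hyz, cid_aux]
      rw [show x n - z - (S (u n) - z) = x n - S (u n) by abel]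
    have h1 : ‖x (n+1) - z‖ ^ 2 ≤ ‖(1 - βs n) • x n + βs n • S (u n) - z‖ ^ 2 := by
      rw [hx n]
      exact sq_mono _ _ (quasi z hz _)
    have h2 : ‖S (u n) - z‖ ^ 2 ≤ ‖x n - z‖ ^ 2 - ‖x n - u n‖ ^ 2 := by
      have := sq_mono _ _ (quasi z hz (u n))
      have := firm z hz n
      linarith
    have h3 : βs n * ‖S (u n) - z‖ ^ 2 ≤ βs n * (‖x n - z‖ ^ 2 - ‖x n - u n‖ ^ 2) :=
      mul_le_mul_of_nonneg_left h2 ht0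
    nlinarith
  -- the norm distance to any point of K is antitone
  have anti : ∀ z ∈ K, Antitone (fun n => ‖x n - z‖) := by
    intro z hz
    apply antitone_nat_of_succ_le
    intro n
    have hm := main z hz n
    obtain ⟨hb1n, hb2n⟩ := hβs n
    have ht0 : (0:ℝ) ≤ βs n := le_trans hb.le hb1n
    have h1 : βs n * ‖x n - u n‖ ^ 2 ≥ 0 := by positivity
    have h2 : βs n * (1 - βs n) * ‖x n - S (u n)‖ ^ 2 ≥ 0 := by
      have : (0:ℝ) ≤ 1 - βs n := by linarith
      positivity
    have hsq : ‖x (n+1) - z‖ ^ 2 ≤ ‖x n - z‖ ^ 2 := by linarith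
    exact le_of_sq_le_sq hsq (norm_nonneg _)
  have antisq : ∀ z ∈ K, Antitone (fun n => ‖x n - z‖ ^ 2) := by
    intro z hz n m hnm
    exact sq_mono _ _ (anti z hz hnm)
  -- convergence of ‖x n - z‖² for z ∈ K
  have hconv : ∀ z ∈ K, Tendsto (fun n => ‖x n - z‖ ^ 2) atTop (𝓝 (⨅ n, ‖x n - z‖ ^ 2)) := by
    intro z hz
    exact tendsto_atTop_ciInf (antisq z hz) ⟨0, by rintro y ⟨n, rfl⟩; positivity⟩
  have hdiff0 : ∀ z ∈ K, Tendsto (fun n => ‖x n - z‖ ^ 2 - ‖x (n+1) - z‖ ^ 2) atTop (𝓝 0) := by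
    intro z hz
    have h1 := hconv z hz
    have h2 : Tendsto (fun n => ‖x (n+1) - z‖ ^ 2) atTop (𝓝 (⨅ n, ‖x n - z‖ ^ 2)) :=
      h1.comp (tendsto_add_atTop_nat 1)
    simpa using h1.sub h2
  -- ‖x n - u n‖ → 0
  have hxusq : Tendsto (fun n => ‖x n - u n‖ ^ 2) atTop (𝓝 0) := by
    apply squeeze_zero (fun n => by positivity)
      (g := fun n => (1/b) * (‖x n - p₀‖ ^ 2 - ‖x (n+1) - p₀‖ ^ 2))
    · intro n
      have hm := main p₀ hp₀ n
      obtain ⟨hb1n, hb2n⟩ := hβs n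
      have h2 : 0 ≤ βs n * (1 - βs n) * ‖x n - S (u n)‖ ^ 2 := by
        have h0 : (0:ℝ) ≤ βs n := le_trans hb.le hb1n
        have : (0:ℝ) ≤ 1 - βs n := by linarith
        positivity
      have h3 : b * ‖x n - u n‖ ^ 2 ≤ βs n * ‖x n - u n‖ ^ 2 :=
        mul_le_mul_of_nonneg_right hb1n (by positivity)
      rw [← sub_nonneg]
      have : b * ‖x n - u n‖ ^ 2 ≤ ‖x n - p₀‖ ^ 2 - ‖x (n+1) - p₀‖ ^ 2 := by linarith
      calc (0:ℝ) ≤ (1/b) * (b * ‖x n - u n‖ ^ 2) - ‖x n - u n‖ ^ 2 := by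
            field_simp; simp
        _ ≤ (1/b) * (‖x n - p₀‖ ^ 2 - ‖x (n+1) - p₀‖ ^ 2) - ‖x n - u n‖ ^ 2 := by
            have := mul_le_mul_of_nonneg_left this (by positivity : (0:ℝ) ≤ 1/b)
            linarith
    · simpa using (hdiff0 p₀ hp₀).const_mul (1/b)
  have norm_of_sq : ∀ g : ℕ → H, Tendsto (fun n => ‖g n‖ ^ 2) atTop (𝓝 0)
      → Tendsto (fun n => ‖g n‖) atTop (𝓝 0) := by
    intro g hg
    have h1 : Tendsto (fun n => Real.sqrt (‖g n‖ ^ 2)) atTop (𝓝 (Real.sqrt 0)) :=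
      (Real.continuous_sqrt.tendsto 0).comp hg
    rw [Real.sqrt_zero] at h1
    convert h1 using 2 with n
    rw [Real.sqrt_sq (norm_nonneg _)]
  have hxu : Tendsto (fun n => ‖x n - u n‖) atTop (𝓝 0) := norm_of_sq _ hxusq
  -- ‖x n - S (u n)‖ → 0
  have hβbd : IsBoundedUnder (· ≥ ·) atTop (fun n => βs n * (1 - βs n)) := by
    refine Filter.isBoundedUnder_of ⟨0, fun n => ?_⟩
    obtain ⟨h1, h2⟩ := hβs n
    have : (0:ℝ) ≤ βs n := le_trans hb.le h1
    have : (0:ℝ) ≤ 1 - βs n := by linarith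
    positivity
  have hβev : ∀ᶠ n in atTop,
      Filter.liminf (fun n => βs n * (1 - βs n)) Filter.atTop / 2 < βs n * (1 - βs n) :=
    eventually_lt_of_lt_liminf (by linarith) hβbd
  have hxSusq : Tendsto (fun n => ‖x n - S (u n)‖ ^ 2) atTop (𝓝 0) := by
    set c := Filter.liminf (fun n => βs n * (1 - βs n)) Filter.atTop with hc
    have hc2 : 0 < c / 2 := by linarith
    apply squeeze_zero' (Eventually.of_forall fun n => by positivity)
      (g := fun n => (2/c) * (‖x n - p₀‖ ^ 2 - ‖x (n+1) - p₀‖ ^ 2))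
    · filter_upwards [hβev] with n hn
      have hm := main p₀ hp₀ n
      obtain ⟨hb1n, hb2n⟩ := hβs n
      have h0 : (0:ℝ) ≤ βs n := le_trans hb.le hb1n
      have h1 : 0 ≤ βs n * ‖x n - u n‖ ^ 2 := by positivity
      have h3 : (c/2) * ‖x n - S (u n)‖ ^ 2 ≤ βs n * (1 - βs n) * ‖x n - S (u n)‖ ^ 2 :=
        mul_le_mul_of_nonneg_right hn.le (by positivity)
      have h4 : (c/2) * ‖x n - S (u n)‖ ^ 2 ≤ ‖x n - p₀‖ ^ 2 - ‖x (n+1) - p₀‖ ^ 2 := by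
        linarith
      have := mul_le_mul_of_nonneg_left h4 (by positivity : (0:ℝ) ≤ 2/c)
      calc ‖x n - S (u n)‖ ^ 2 = (2/c) * ((c/2) * ‖x n - S (u n)‖ ^ 2) := by
            field_simp
        _ ≤ (2/c) * (‖x n - p₀‖ ^ 2 - ‖x (n+1) - p₀‖ ^ 2) := this
    · simpa using (hdiff0 p₀ hp₀).const_mul (2/c)
  have hxSu : Tendsto (fun n => ‖x n - S (u n)‖) atTop (𝓝 0) := norm_of_sq _ hxSusq
  have huSu : Tendsto (fun n => ‖u n - S (u n)‖) atTop (𝓝 0) := by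
    apply squeeze_zero (fun n => norm_nonneg _)
      (g := fun n => ‖x n - u n‖ + ‖x n - S (u n)‖)
    · intro n
      calc ‖u n - S (u n)‖ = ‖(u n - x n) + (x n - S (u n))‖ := by rw [show
            (u n - x n) + (x n - S (u n)) = u n - S (u n) by abel]
        _ ≤ ‖u n - x n‖ + ‖x n - S (u n)‖ := norm_add_le _ _
        _ = ‖x n - u n‖ + ‖x n - S (u n)‖ := by rw [norm_sub_rev]
    · simpa using hxu.add hxSu
  -- boundedness
  set M₀ : ℝ := ‖x 0 - p₀‖ + ‖p₀‖ with hM₀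
  have hxbd : ∀ n, ‖x n‖ ≤ M₀ := by
    intro n
    have h1 : ‖x n - p₀‖ ≤ ‖x 0 - p₀‖ := anti p₀ hp₀ (Nat.zero_le n)
    calc ‖x n‖ = ‖(x n - p₀) + p₀‖ := by rw [sub_add_cancel]
      _ ≤ ‖x n - p₀‖ + ‖p₀‖ := norm_add_le _ _
      _ ≤ M₀ := by rw [hM₀]; linarith
  have hubd : ∀ n, ‖u n‖ ≤ M₀ := by
    intro n
    have h2 : ‖u n - p₀‖ ^ 2 ≤ ‖x n - p₀‖ ^ 2 := by
      have := firm p₀ hp₀ n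
      nlinarith [sq_nonneg ‖x n - u n‖]
    have h1 : ‖u n - p₀‖ ≤ ‖x 0 - p₀‖ :=
      le_trans (le_of_sq_le_sq h2 (norm_nonneg _)) (anti p₀ hp₀ (Nat.zero_le n))
    calc ‖u n‖ = ‖(u n - p₀) + p₀‖ := by rw [sub_add_cancel]
      _ ≤ ‖u n - p₀‖ + ‖p₀‖ := norm_add_le _ _
      _ ≤ M₀ := by rw [hM₀]; linarith
  -- Minty backward: if f y z ≤ 0 for all y ∈ E then z solves EP
  have hMintyBack : ∀ z ∈ E, (∀ y ∈ E, f y z ≤ 0) → ∀ w ∈ E, 0 ≤ f z w := by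
    intro z hzE hz w hw
    have hpos : ∀ t : ℝ, t ∈ Set.Ioc (0:ℝ) 1 → 0 ≤ f (t • w + (1 - t) • z) w := by
      intro t ht
      have hzt : t • w + (1 - t) • z ∈ E := hEco hw hzE ht.1.le (by linarith [ht.2]) (by ring)
      have h0 : f (t • w + (1 - t) • z) (t • w + (1 - t) • z) = 0 := hA1 _ hzt
      have hcv := (hA4c _ hzt).2 hw hzE ht.1.le (by linarith [ht.2] : (0:ℝ) ≤ 1 - t) (by ring)
      have hzneg : f (t • w + (1 - t) • z) z ≤ 0 := hz _ hzt
      have h1 : 0 ≤ t * f (t • w + (1 - t) • z) w := by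
        have h6 := hcv
        simp only [smul_eq_mul] at h6
        have h5 : (1 - t) * f (t • w + (1 - t) • z) z ≤ 0 :=
          mul_nonpos_of_nonneg_of_nonpos (by linarith [ht.2]) hzneg
        linarith
      exact nonneg_of_mul_nonneg_right h1 ht.1
    have h3 := hA3 z hzE w hw w hw
    refine le_trans ?_ h3
    rw [Filter.limsup_eq]
    rcases Set.eq_empty_or_nonempty {a : ℝ | ∀ᶠ t in 𝓝[>] (0:ℝ),
        f (t • w + (1 - t) • z) w ≤ a} with hemp | hne
    · rw [hemp, Real.sInf_empty]
    · apply le_csInf hne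
      intro a ha
      have hIoc : Set.Ioc (0:ℝ) 1 ∈ 𝓝[>] (0:ℝ) := Ioc_mem_nhdsGT_of_mem (by norm_num : (0:ℝ) ∈ Set.Ico (0:ℝ) 1)
      have : ∀ᶠ t in 𝓝[>] (0:ℝ), 0 ≤ f (t • w + (1 - t) • z) w ∧ f (t • w + (1 - t) • z) w ≤ a := by
        filter_upwards [hIoc, ha] with t h1 h2
        exact ⟨hpos t h1, h2⟩
      obtain ⟨t, h1, h2⟩ := this.exists
      linarith
  -- every weak subsequential limit lies in K
  have hcluster : ∀ ψ : ℕ → ℕ, StrictMono ψ → ∀ v₀ : H,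
      (∀ w : H, Tendsto (fun n => ⟪x (ψ n), w⟫) atTop (𝓝 ⟪v₀, w⟫)) → v₀ ∈ K := by
    intro ψ hψ v₀ hψw
    have hψtop : Tendsto ψ atTop atTop := hψ.tendsto_atTop
    have hxuψ : Tendsto (fun n => ‖x (ψ n) - u (ψ n)‖) atTop (𝓝 0) := hxu.comp hψtop
    have huw : ∀ w : H, Tendsto (fun n => ⟪u (ψ n), w⟫) atTop (𝓝 ⟪v₀, w⟫) := by
      intro w
      have h1 : Tendsto (fun n => ⟪u (ψ n) - x (ψ n), w⟫) atTop (𝓝 0) := by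
        apply squeeze_zero_norm (a := fun n => ‖x (ψ n) - u (ψ n)‖ * ‖w‖)
        · intro n
          rw [Real.norm_eq_abs]
          refine le_trans (abs_real_inner_le_norm _ _) ?_
          rw [norm_sub_rev]
        · simpa using hxuψ.mul_const ‖w‖
      have := (hψw w).add h1
      simp only [add_zero] at this
      convert this using 2 with n
      rw [← inner_add_left]
      congr 1
      abel
    -- v₀ ∈ E
    have hvE : v₀ ∈ E := by
      by_contra hv
      obtain ⟨ℓ, s, hls, hsv⟩ := geometric_hahn_banach_closed_point hEco hEcl hv
      set wℓ := (InnerProductSpace.toDual ℝ H).symm ℓ with hwℓ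
      have hrep : ∀ y : H, ⟪y, wℓ⟫ = ℓ y := by
        intro y
        rw [real_inner_comm]
        exact InnerProductSpace.toDual_symm_apply
      have h1 : Tendsto (fun n => ℓ (u (ψ n))) atTop (𝓝 (ℓ v₀)) := by
        have := huw wℓ
        simp only [hrep] at this
        exact this
      have h2 : ℓ v₀ ≤ s := le_of_tendsto h1
        (Eventually.of_forall fun n => (hls _ (hu (ψ n))).le)
      linarith
    -- S v₀ = v₀ (demiclosedness)
    have hSv : S v₀ = v₀ := by
      set d : ℕ → H := fun m => S (u m) - u m with hd
      have hdn : Tendsto (fun m => ‖d (ψ m)‖) atTop (𝓝 0) := by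
        simpa [hd, norm_sub_rev, Function.comp_def] using huSu.comp hψtop
      set e : ℕ → ℝ := fun m =>
        β * (2 * ⟪d m, u m - v₀⟫ + ‖d m‖ ^ 2) - α * (2 * ⟪d m, u m - S v₀⟫ + ‖d m‖ ^ 2)
        with he
      have hkey : ∀ m, ‖v₀ - S v₀‖ ^ 2 ≤ -2 * ⟪u m - v₀, v₀ - S v₀⟫ + e m := by
        intro m
        have h := hS (u m) v₀
        have e1 : ‖S (u m) - S v₀‖ ^ 2
            = ‖u m - S v₀‖ ^ 2 + (2 * ⟪d m, u m - S v₀⟫ + ‖d m‖ ^ 2) := by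
          rw [show S (u m) - S v₀ = (u m - S v₀) + d m by simp only [hd]; abel]
          rw [norm_add_sq_real, real_inner_comm]
          ring
        have e2 : ‖S (u m) - v₀‖ ^ 2
            = ‖u m - v₀‖ ^ 2 + (2 * ⟪d m, u m - v₀⟫ + ‖d m‖ ^ 2) := by
          rw [show S (u m) - v₀ = (u m - v₀) + d m by simp only [hd]; abel]
          rw [norm_add_sq_real, real_inner_comm]
          ring
        have e3 : ‖u m - S v₀‖ ^ 2
            = ‖u m - v₀‖ ^ 2 + 2 * ⟪u m - v₀, v₀ - S v₀⟫ + ‖v₀ - S v₀‖ ^ 2 := by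
          rw [show u m - S v₀ = (u m - v₀) + (v₀ - S v₀) by abel]
          exact norm_add_sq_real _ _
        rw [e1, e2] at h
        rw [he]
        simp only
        nlinarith [e3]
      have hrhs : Tendsto (fun m => -2 * ⟪u (ψ m) - v₀, v₀ - S v₀⟫ + e (ψ m)) atTop (𝓝 0) := by
        have hbd : ∀ m, ‖u m - v₀‖ ≤ M₀ + ‖v₀‖ := fun m => le_trans (norm_sub_le _ _)
          (by linarith [hubd m])
        have hbd2 : ∀ m, ‖u m - S v₀‖ ≤ M₀ + ‖S v₀‖ := fun m => le_trans (norm_sub_le _ _)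
          (by linarith [hubd m])
        have t1 : Tendsto (fun m => ⟪u (ψ m) - v₀, v₀ - S v₀⟫) atTop (𝓝 0) := by
          have := (huw (v₀ - S v₀)).sub (tendsto_const_nhds (x := ⟪v₀, v₀ - S v₀⟫))
          simp only [sub_self] at this
          convert this using 2 with n
          rw [inner_sub_left]
        have t2 : Tendsto (fun m => ⟪d (ψ m), u (ψ m) - v₀⟫) atTop (𝓝 0) := by
          apply squeeze_zero_norm (a := fun m => ‖d (ψ m)‖ * (M₀ + ‖v₀‖))
          · intro m
            rw [Real.norm_eq_abs]
            refine le_trans (abs_real_inner_le_norm _ _) ?_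
            exact mul_le_mul_of_nonneg_left (hbd _) (norm_nonneg _)
          · simpa using hdn.mul_const _
        have t3 : Tendsto (fun m => ⟪d (ψ m), u (ψ m) - S v₀⟫) atTop (𝓝 0) := by
          apply squeeze_zero_norm (a := fun m => ‖d (ψ m)‖ * (M₀ + ‖S v₀‖))
          · intro m
            rw [Real.norm_eq_abs]
            refine le_trans (abs_real_inner_le_norm _ _) ?_
            exact mul_le_mul_of_nonneg_left (hbd2 _) (norm_nonneg _)
          · simpa using hdn.mul_const _
        have t4 : Tendsto (fun m => ‖d (ψ m)‖ ^ 2) atTop (𝓝 0) := by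
          have := hdn.mul hdn
          simpa [pow_two] using this
        have t5 : Tendsto (fun m => e (ψ m)) atTop (𝓝 0) := by
          have := ((t2.const_mul 2).add t4).const_mul β |>.sub
            (((t3.const_mul 2).add t4).const_mul α)
          simpa [he] using this
        have := (t1.const_mul (-2)).add t5
        simpa using this
      have h0 : ‖v₀ - S v₀‖ ^ 2 ≤ 0 :=
        ge_of_tendsto hrhs (Eventually.of_forall fun m => hkey (ψ m))
      have h0' : ‖v₀ - S v₀‖ ^ 2 = 0 := le_antisymm h0 (by positivity)
      have : ‖v₀ - S v₀‖ = 0 := (pow_eq_zero_iff two_ne_zero).mp h0'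
      have : v₀ - S v₀ = 0 := norm_eq_zero.mp this
      have : v₀ = S v₀ := by rwa [sub_eq_zero] at this
      exact this.symm
    -- v₀ solves the equilibrium problem
    have hMv : ∀ y ∈ E, f y v₀ ≤ 0 := by
      intro y hy
      set t : ℕ → ℝ := fun m => (1 / r m) * ⟪y - u m, u m - x m⟫ with ht
      have hfy : ∀ m, f y (u m) ≤ t m := by
        intro m
        have h1 := hueq m y hy
        have h2 := hA2 (u m) (hu m) y hy
        rw [ht]
        simp only
        linarith
      have hrbd : IsBoundedUnder (· ≥ ·) atTop r :=
        Filter.isBoundedUnder_of ⟨0, fun n => (hr n).le⟩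
      have hrev : ∀ᶠ m in atTop, Filter.liminf r Filter.atTop / 2 < r m :=
        eventually_lt_of_lt_liminf (by linarith) hrbd
      have htm : Tendsto t atTop (𝓝 0) := by
        set R := Filter.liminf r Filter.atTop with hR
        apply squeeze_zero_norm' (a := fun m => (2 / R) * ((‖y‖ + M₀) * ‖u m - x m‖))
        · filter_upwards [hrev] with m hm
          rw [ht, Real.norm_eq_abs]
          simp only
          rw [abs_mul]
          have hRm : 0 < r m := hr m
          have h1 : |1 / r m| ≤ 2 / R := by
            rw [abs_of_pos (by positivity)]
            rw [div_le_div_iff₀ hRm (by linarith)]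
            linarith [hm, hrinf]
          have h2 : |⟪y - u m, u m - x m⟫| ≤ (‖y‖ + M₀) * ‖u m - x m‖ := by
            refine le_trans (abs_real_inner_le_norm _ _) ?_
            apply mul_le_mul_of_nonneg_right _ (norm_nonneg _)
            exact le_trans (norm_sub_le _ _) (by linarith [hubd m])
          exact mul_le_mul h1 h2 (abs_nonneg _) (by positivity)
        · have : Tendsto (fun m => ‖u m - x m‖) atTop (𝓝 0) := by
            simpa [norm_sub_rev] using hxu
          simpa using (this.const_mul ((‖y‖ + M₀))).const_mul (2 / R)
      -- epigraph separation
      set Epi : Set (H × ℝ) := {q | q.1 ∈ E ∧ f y q.1 ≤ q.2} with hEpi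
      have hEpiConv : Convex ℝ Epi := by
        rintro ⟨z1, a1⟩ ⟨hz1, ha1⟩ ⟨z2, a2⟩ ⟨hz2, ha2⟩ s1 s2 hs1 hs2 hs12
        constructor
        · exact hEco hz1 hz2 hs1 hs2 hs12
        · have := (hA4c y hy).2 hz1 hz2 hs1 hs2 hs12
          simp only [smul_eq_mul] at this ⊢
          refine le_trans this ?_
          have e1 : s1 * f y z1 ≤ s1 * a1 := mul_le_mul_of_nonneg_left ha1 hs1
          have e2 : s2 * f y z2 ≤ s2 * a2 := mul_le_mul_of_nonneg_left ha2 hs2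
          exact add_le_add e1 e2
      have hEpiCl : IsClosed Epi := by
        apply IsSeqClosed.isClosed
        rintro q q₀ hq hql
        have hq1 : Tendsto (fun k => (q k).1) atTop (𝓝 q₀.1) :=
          (continuous_fst.tendsto q₀).comp hql
        have hq2 : Tendsto (fun k => (q k).2) atTop (𝓝 q₀.2) :=
          (continuous_snd.tendsto q₀).comp hql
        have hq0E : q₀.1 ∈ E := hEcl.mem_of_tendsto hq1
          (Eventually.of_forall fun k => (hq k).1)
        refine ⟨hq0E, ?_⟩
        by_contra hlt
        push_neg at hlt
        set cc := (q₀.2 + f y q₀.1) / 2 with hcc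
        have h1 := hA4l y hy q₀.1 hq0E cc (by rw [hcc]; linarith)
        have h2 : Tendsto (fun k => (q k).1) atTop (𝓝[E] q₀.1) := by
          rw [tendsto_nhdsWithin_iff]
          exact ⟨hq1, Eventually.of_forall fun k => (hq k).1⟩
        have h3 : ∀ᶠ k in atTop, cc < f y ((q k).1) := h2.eventually h1
        have h4 : ∀ᶠ k in atTop, cc < (q k).2 := by
          filter_upwards [h3] with k hk
          exact lt_of_lt_of_le hk (hq k).2
        have h5 : cc ≤ q₀.2 := ge_of_tendsto hq2 (h4.mono fun k hk => hk.le)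
        rw [hcc] at h5
        linarith
      have hvEpi : (v₀, (0:ℝ)) ∈ Epi := by
        by_contra hv
        obtain ⟨ℓ, s, hls, hsv⟩ := geometric_hahn_banach_closed_point hEpiConv hEpiCl hv
        set ℓ1 : H →L[ℝ] ℝ := ℓ.comp (ContinuousLinearMap.inl ℝ H ℝ) with hℓ1
        set c1 : ℝ := ℓ ((0:H), (1:ℝ)) with hc1
        have hdec : ∀ (z : H) (a : ℝ), ℓ (z, a) = ℓ1 z + a * c1 := by
          intro z a
          have : (z, a) = (z, (0:ℝ)) + a • ((0:H), (1:ℝ)) := by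
            simp [Prod.ext_iff]
          rw [this, map_add, map_smul, hc1]
          simp [hℓ1, smul_eq_mul]
        set wℓ := (InnerProductSpace.toDual ℝ H).symm ℓ1 with hwℓ
        have hrep : ∀ z : H, ⟪z, wℓ⟫ = ℓ1 z := by
          intro z
          rw [real_inner_comm]
          exact InnerProductSpace.toDual_symm_apply
        have h1 : Tendsto (fun n => ℓ (u (ψ n), t (ψ n))) atTop (𝓝 (ℓ (v₀, 0))) := by
          have hu1 : Tendsto (fun n => ℓ1 (u (ψ n))) atTop (𝓝 (ℓ1 v₀)) := by
            have := huw wℓ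
            simp only [hrep] at this
            exact this
          have hu2 : Tendsto (fun n => t (ψ n) * c1) atTop (𝓝 0) := by
            simpa using (htm.comp hψtop).mul_const c1
          have := hu1.add hu2
          rw [add_zero] at this
          simp only [hdec]
          convert this using 2
          ring
        have h2 : ∀ n, ℓ (u (ψ n), t (ψ n)) < s := by
          intro n
          exact hls _ ⟨hu (ψ n), hfy (ψ n)⟩
        have h3 : ℓ (v₀, 0) ≤ s := le_of_tendsto h1
          (Eventually.of_forall fun n => (h2 n).le)
        linarith
      exact hvEpi.2
    rw [hK]
    exact ⟨hSv, hvE, hMintyBack v₀ hvE hMv⟩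
  -- extract a weak cluster point
  obtain ⟨φ, hφ, v, hφw⟩ := wbw x M₀ hxbd
  have hvK : v ∈ K := hcluster φ hφ v hφw
  -- Opial-type uniqueness of weak cluster points
  have huniq : ∀ v' : H, v' ∈ K →
      (∃ ψ : ℕ → ℕ, StrictMono ψ ∧ ∀ w : H,
        Tendsto (fun n => ⟪x (ψ n), w⟫) atTop (𝓝 ⟪v', w⟫)) → v' = v := by
    intro v' hv'K ⟨ψ, hψ, hψw⟩
    set g : ℕ → ℝ := fun n => ⟪x n - v, v - v'⟫ with hg
    have hgid : ∀ n, g n = (‖x n - v'‖ ^ 2 - ‖x n - v‖ ^ 2 - ‖v - v'‖ ^ 2) / 2 := by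
      intro n
      have : ‖x n - v'‖ ^ 2 = ‖x n - v‖ ^ 2 + 2 * ⟪x n - v, v - v'⟫ + ‖v - v'‖ ^ 2 := by
        rw [show x n - v' = (x n - v) + (v - v') by abel]
        exact norm_add_sq_real _ _
      rw [hg]; simp only; linarith
    set γ := ((⨅ n, ‖x n - v'‖ ^ 2) - (⨅ n, ‖x n - v‖ ^ 2) - ‖v - v'‖ ^ 2) / 2 with hγ
    have hgconv : Tendsto g atTop (𝓝 γ) := by
      have h1 := hconv v' hv'K
      have h2 := hconv v hvK
      have := ((h1.sub h2).sub (tendsto_const_nhds (x := ‖v - v'‖ ^ 2))).div_const 2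
      rw [hγ]
      convert this using 2 with n
      rw [hgid n]
    have hsub1 : Tendsto (fun n => g (φ n)) atTop (𝓝 0) := by
      have h1 : Tendsto (fun n => ⟪x (φ n), v - v'⟫) atTop (𝓝 ⟪v, v - v'⟫) := hφw _
      have := h1.sub (tendsto_const_nhds (x := ⟪v, v - v'⟫))
      simp only [sub_self] at this
      convert this using 2 with n
      rw [hg]; simp only [inner_sub_left]
    have hsub2 : Tendsto (fun n => g (ψ n)) atTop (𝓝 (-‖v - v'‖ ^ 2)) := by
      have h1 : Tendsto (fun n => ⟪x (ψ n), v - v'⟫) atTop (𝓝 ⟪v', v - v'⟫) := hψw _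
      have := h1.sub (tendsto_const_nhds (x := ⟪v, v - v'⟫))
      have h3 : ⟪v', v - v'⟫ - ⟪v, v - v'⟫ = -‖v - v'‖ ^ 2 := by
        rw [← inner_sub_left, show v' - v = -(v - v') by abel, inner_neg_left,
          real_inner_self_eq_norm_sq]
      rw [h3] at this
      convert this using 2 with n
      rw [hg]; simp only [inner_sub_left]
    have e1 : γ = 0 := tendsto_nhds_unique (hgconv.comp hφ.tendsto_atTop) hsub1
    have e2 : γ = -‖v - v'‖ ^ 2 := tendsto_nhds_unique (hgconv.comp hψ.tendsto_atTop) hsub2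
    have : ‖v - v'‖ ^ 2 = 0 := by rw [e1] at e2; linarith
    have : v - v' = 0 := norm_eq_zero.mp ((pow_eq_zero_iff two_ne_zero).mp this)
    have : v = v' := by rwa [sub_eq_zero] at this
    exact this.symm
  -- full weak convergence
  have hfull : ∀ w : H, Tendsto (fun n => ⟪x n, w⟫) atTop (𝓝 ⟪v, w⟫) := by
    intro w
    by_contra hcon
    rw [Metric.tendsto_atTop] at hcon
    push_neg at hcon
    obtain ⟨ε, hε, hfreq⟩ := hcon
    have hfr : ∃ᶠ n in atTop, ε ≤ dist ⟪x n, w⟫ ⟪v, w⟫ := by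
      rw [Filter.frequently_atTop]
      intro N
      obtain ⟨n, hn1, hn2⟩ := hfreq N
      exact ⟨n, hn1, hn2⟩
    obtain ⟨ψ, hψ, hψp⟩ := Filter.extraction_of_frequently_atTop hfr
    obtain ⟨θ, hθ, v', hθw⟩ := wbw (fun n => x (ψ n)) M₀ (fun n => hxbd _)
    have hcomp : StrictMono (ψ ∘ θ) := hψ.comp hθ
    have hθw' : ∀ w' : H, Tendsto (fun n => ⟪x ((ψ ∘ θ) n), w'⟫) atTop (𝓝 ⟪v', w'⟫) :=
      fun w' => hθw w'
    have hv'K : v' ∈ K := hcluster (ψ ∘ θ) hcomp v' hθw'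
    have : v' = v := huniq v' hv'K ⟨ψ ∘ θ, hcomp, hθw'⟩
    rw [this] at hθw'
    have := (hθw' w).eventually (Metric.ball_mem_nhds ⟪v, w⟫ hε)
    obtain ⟨n, hn⟩ := this.exists
    have := hψp (θ n)
    exact absurd hn (not_lt.mpr this)
  -- Minty forward
  have hMf : ∀ z ∈ K, ∀ y ∈ E, f y z ≤ 0 := by
    intro z hz y hy
    have h1 := hA2 y hy z (hKE z hz)
    have h2 := hKep z hz y hy
    linarith
  -- K is closed
  have hKcl : IsClosed K := by
    apply IsSeqClosed.isClosed
    intro z z₀ hzK hzlim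
    have hzn : Tendsto (fun k => ‖z k - z₀‖) atTop (𝓝 0) :=
      (tendsto_iff_norm_sub_tendsto_zero).mp hzlim
    have hz₀E : z₀ ∈ E := hEcl.mem_of_tendsto hzlim
      (Eventually.of_forall fun k => hKE _ (hzK k))
    have hSz : S z₀ = z₀ := by
      have hkk : ∀ k, ‖S z₀ - z₀‖ ≤ 2 * ‖z k - z₀‖ := by
        intro k
        calc ‖S z₀ - z₀‖ = ‖(S z₀ - z k) + (z k - z₀)‖ := by rw [show
              (S z₀ - z k) + (z k - z₀) = S z₀ - z₀ by abel]
          _ ≤ ‖S z₀ - z k‖ + ‖z k - z₀‖ := norm_add_le _ _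
          _ ≤ ‖z₀ - z k‖ + ‖z k - z₀‖ := by linarith [quasi (z k) (hzK k) z₀]
          _ = 2 * ‖z k - z₀‖ := by rw [norm_sub_rev]; ring
      have h0 : ‖S z₀ - z₀‖ ≤ 0 := ge_of_tendsto (by simpa using hzn.const_mul 2)
        (Eventually.of_forall hkk)
      have : S z₀ - z₀ = 0 := norm_eq_zero.mp (le_antisymm h0 (norm_nonneg _))
      rwa [sub_eq_zero] at this
    have hfy : ∀ y ∈ E, f y z₀ ≤ 0 := by
      intro y hy
      by_contra hlt
      push_neg at hlt
      have h1 := hA4l y hy z₀ hz₀E (f y z₀ / 2) (by linarith)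
      have h2 : Tendsto z atTop (𝓝[E] z₀) := by
        rw [tendsto_nhdsWithin_iff]
        exact ⟨hzlim, Eventually.of_forall fun k => hKE _ (hzK k)⟩
      have h3 := (h2.eventually h1).and (Eventually.of_forall fun k => hMf _ (hzK k) y hy)
      obtain ⟨k, hk1, hk2⟩ := h3.exists
      linarith
    rw [hK]
    exact ⟨hSz, hz₀E, hMintyBack z₀ hz₀E hfy⟩
  -- K is convex
  have hKco : Convex ℝ K := by
    intro p1 hp1 p2 hp2 s1 s2 hs1 hs2 hs12
    have hmE : s1 • p1 + s2 • p2 ∈ E := hEco (hKE _ hp1) (hKE _ hp2) hs1 hs2 hs12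
    have hmf : ∀ y ∈ E, f y (s1 • p1 + s2 • p2) ≤ 0 := by
      intro y hy
      have h1 := (hA4c y hy).2 (hKE _ hp1) (hKE _ hp2) hs1 hs2 hs12
      have h2 := hMf p1 hp1 y hy
      have h3 := hMf p2 hp2 y hy
      have e1 : s1 * f y p1 ≤ 0 := mul_nonpos_of_nonneg_of_nonpos hs1 h2
      have e2 : s2 * f y p2 ≤ 0 := mul_nonpos_of_nonneg_of_nonpos hs2 h3
      simp only [smul_eq_mul] at h1
      linarith
    have hSm : S (s1 • p1 + s2 • p2) = s1 • p1 + s2 • p2 := by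
      set m := s1 • p1 + s2 • p2 with hm
      have hs1' : s1 = 1 - s2 := by linarith
      have h1 : ‖S m - p1‖ ≤ ‖m - p1‖ := quasi p1 hp1 m
      have h2 : ‖S m - p2‖ ≤ ‖m - p2‖ := quasi p2 hp2 m
      have hid : S m - m = (1 - s2) • (S m - p1) + s2 • (S m - p2) := by
        rw [hm, hs1']
        module
      have hcid := cid_aux s2 (S m - p1) (S m - p2)
      rw [show S m - p1 - (S m - p2) = p2 - p1 by abel] at hcid
      have hm1 : ‖m - p1‖ = s2 * ‖p2 - p1‖ := by
        rw [show m - p1 = s2 • (p2 - p1) by rw [hm, hs1']; module]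
        rw [norm_smul, Real.norm_eq_abs, abs_of_nonneg hs2]
      have hm2 : ‖m - p2‖ = (1 - s2) * ‖p2 - p1‖ := by
        rw [show m - p2 = (1 - s2) • (p1 - p2) by rw [hm, hs1']; module]
        rw [norm_smul, Real.norm_eq_abs, abs_of_nonneg (by linarith), norm_sub_rev]
      have hsq : ‖S m - m‖ ^ 2 ≤ 0 := by
        rw [hid, hcid]
        have e1 : ‖S m - p1‖ ^ 2 ≤ (s2 * ‖p2 - p1‖) ^ 2 := by
          rw [← hm1]; exact sq_mono _ _ h1
        have e2 : ‖S m - p2‖ ^ 2 ≤ ((1 - s2) * ‖p2 - p1‖) ^ 2 := by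
          rw [← hm2]; exact sq_mono _ _ h2
        have hs2' : (0:ℝ) ≤ 1 - s2 := by linarith
        nlinarith [sq_nonneg ‖p2 - p1‖]
      have : S m - m = 0 := norm_eq_zero.mp
        (le_antisymm (by nlinarith [norm_nonneg (S m - m)]) (norm_nonneg _))
      rwa [sub_eq_zero] at this
    rw [hK]
    exact ⟨hSm, hmE, hMintyBack _ hmE hmf⟩
  -- metric projections onto K
  have hproj : ∀ n, ∃ w ∈ K, ‖x n - w‖ = ⨅ w' : K, ‖x n - w'‖ := fun n =>
    exists_norm_eq_iInf_of_complete_convex ⟨v, hvK⟩ hKcl.isComplete hKco (x n)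
  choose p hpK hpinf using hproj
  have hbdd : ∀ n, BddBelow (Set.range fun w' : K => ‖x n - w'‖) := by
    intro n
    exact ⟨0, by rintro y ⟨w', rfl⟩; exact norm_nonneg _⟩
  have hple : ∀ n, ∀ w ∈ K, ‖x n - p n‖ ≤ ‖x n - w‖ := by
    intro n w hw
    rw [hpinf n]
    exact ciInf_le (hbdd n) ⟨w, hw⟩
  have hpineq : ∀ n, ∀ w ∈ K, ⟪x n - p n, w - p n⟫ ≤ 0 := fun n =>
    (norm_eq_iInf_iff_real_inner_le_zero hKco (hpK n)).mp (hpinf n)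
  set d : ℕ → ℝ := fun n => ‖x n - p n‖ with hd
  have hdanti : Antitone d := by
    apply antitone_nat_of_succ_le
    intro n
    calc d (n+1) ≤ ‖x (n+1) - p n‖ := hple (n+1) (p n) (hpK n)
      _ ≤ ‖x n - p n‖ := anti (p n) (hpK n) (Nat.le_succ n)
  have hdbl : BddBelow (Set.range d) := ⟨0, by rintro y ⟨n, rfl⟩; exact norm_nonneg _⟩
  have hdconv : Tendsto d atTop (𝓝 (⨅ n, d n)) := tendsto_atTop_ciInf hdanti hdbl
  have hdlb : ∀ n, (⨅ k, d k) ≤ d n := fun n => ciInf_le hdbl n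
  have hδ0 : 0 ≤ ⨅ k, d k := le_ciInf fun n => norm_nonneg _
  have hpp : ∀ n m, n ≤ m → ‖p m - p n‖ ^ 2 ≤ d n ^ 2 - d m ^ 2 := by
    intro n m hnm
    have hidq : ‖x m - p n‖ ^ 2
        = d m ^ 2 + 2 * ⟪x m - p m, p m - p n⟫ + ‖p m - p n‖ ^ 2 := by
      rw [show x m - p n = (x m - p m) + (p m - p n) by abel]
      exact norm_add_sq_real _ _
    have hin : 0 ≤ ⟪x m - p m, p m - p n⟫ := by
      have := hpineq m (p n) (hpK n)
      have heq : ⟪x m - p m, p n - p m⟫ = -⟪x m - p m, p m - p n⟫ := by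
        rw [show p n - p m = -(p m - p n) by abel, inner_neg_right]
      rw [heq] at this
      linarith
    have hle : ‖x m - p n‖ ^ 2 ≤ d n ^ 2 :=
      sq_mono _ _ (anti (p n) (hpK n) hnm)
    linarith
  have hcauchy : CauchySeq p := by
    rw [Metric.cauchySeq_iff']
    intro ε hε
    have hsq : Tendsto (fun n => d n ^ 2) atTop (𝓝 ((⨅ k, d k) ^ 2)) := hdconv.pow 2
    have hev : ∀ᶠ n in atTop, d n ^ 2 < (⨅ k, d k) ^ 2 + ε ^ 2 :=
      hsq.eventually (gt_mem_nhds (by nlinarith))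
    obtain ⟨N, hN⟩ := hev.exists_forall_of_atTop
    refine ⟨N, fun n hn => ?_⟩
    have h1 : ‖p n - p N‖ ^ 2 ≤ d N ^ 2 - d n ^ 2 := hpp N n hn
    have h2 : (⨅ k, d k) ^ 2 ≤ d n ^ 2 := pow_le_pow_left₀ hδ0 (hdlb n) 2
    have h3 : ‖p n - p N‖ ^ 2 < ε ^ 2 := by
      have := hN N (le_refl N)
      linarith
    rw [dist_eq_norm]
    exact lt_of_pow_lt_pow_left₀ 2 hε.le h3
  obtain ⟨q, hq⟩ := cauchySeq_tendsto_of_complete hcauchy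
  have hqK : q ∈ K := hKcl.mem_of_tendsto hq (Eventually.of_forall hpK)
  have hpq0 : Tendsto (fun n => ‖q - p n‖) atTop (𝓝 0) := by
    have := (tendsto_iff_norm_sub_tendsto_zero).mp hq
    simpa [norm_sub_rev] using this
  have hqv : q = v := by
    have h0 : ∀ n, ⟪x n - p n, v - p n⟫ ≤ 0 := fun n => hpineq n v hvK
    have hdec : ∀ n, ⟪x n - p n, v - p n⟫
        = ⟪x n, v - q⟫ + ⟪x n, q - p n⟫ - ⟪p n, v - p n⟫ := by
      intro n
      rw [inner_sub_left, ← inner_add_right]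
      rw [show v - q + (q - p n) = v - p n by abel]
    have t1 : Tendsto (fun n => ⟪x n, v - q⟫) atTop (𝓝 ⟪v, v - q⟫) := hfull _
    have t2 : Tendsto (fun n => ⟪x n, q - p n⟫) atTop (𝓝 0) := by
      apply squeeze_zero_norm (a := fun n => M₀ * ‖q - p n‖)
      · intro n
        rw [Real.norm_eq_abs]
        refine le_trans (abs_real_inner_le_norm _ _) ?_
        exact mul_le_mul_of_nonneg_right (hxbd n) (norm_nonneg _)
      · simpa using hpq0.const_mul M₀
    have t3 : Tendsto (fun n => ⟪p n, v - p n⟫) atTop (𝓝 ⟪q, v - q⟫) := by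
      have hcont : Continuous (fun z : H => ⟪z, v - z⟫) :=
        continuous_id.inner (continuous_const.sub continuous_id)
      exact (hcont.tendsto q).comp hq
    have tall : Tendsto (fun n => ⟪x n - p n, v - p n⟫) atTop (𝓝 ⟪v - q, v - q⟫) := by
      have := (t1.add t2).sub t3
      rw [add_zero] at this
      have heq : ⟪v, v - q⟫ - ⟪q, v - q⟫ = ⟪v - q, v - q⟫ := by
        rw [inner_sub_left]
      rw [heq] at this
      convert this using 2 with n
      exact hdec n
    have hle : ⟪v - q, v - q⟫ ≤ (0:ℝ) := le_of_tendsto tall (Eventually.of_forall h0)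
    have : v - q = 0 := real_inner_self_nonpos.mp hle
    have : v = q := by rwa [sub_eq_zero] at this
    exact this.symm
  refine ⟨v, hvK, hfull, p, fun n => ⟨hpK n, hple n⟩, ?_⟩
  rw [← hqv]
  exact hq
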